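/- Let f : ℝ → ℝ be twice continuously differentiable on a compact interval x with center x⁰ and radius r. Suppose ∇⁰ = |f′(x⁰)| > 0 and O_β = [b̲, b̄] is an interval containing ½ f″(ξ)(x − x⁰)² for all x, ξ ∈ x. If the interval [f(x⁰) − ∇⁰ r + b̄, f(x⁰) + ∇⁰ r + b̲] is nonempty, then it is contained in the range of f over x. -/

import Mathlib

open Set

private lemma iterDW_of_mem_nhds {f : ℝ → ℝ} {s : Set ℝ} {x : ℝ} {n : ℕ} (h : s ∈ nhds x) :
    iteratedDerivWithin n f s x = iteratedDeriv n f x := by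
  simp only [iteratedDerivWithin, iteratedDeriv]
  rw [← iteratedFDerivWithin_univ, ← Set.univ_inter s, iteratedFDerivWithin_inter h]

private lemma expand_right {f : ℝ → ℝ} {u v : ℝ} (huv : u < v)
    (hf : ContDiffOn ℝ 2 f (Set.Icc u v)) (hdu : DifferentiableAt ℝ f u) :
    ∃ ξ ∈ Set.Ioo u v,
      f v = f u + deriv f u * (v - u) + (1 / 2) * deriv (deriv f) ξ * (v - u) ^ 2 := by
  have hu : UniqueDiffOn ℝ (Set.Icc u v) := uniqueDiffOn_Icc huv
  have hf1 : ContDiffOn ℝ 1 f (Set.Icc u v) := hf.of_le (by norm_num)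
  have hf' : DifferentiableOn ℝ (iteratedDerivWithin 1 f (Set.Icc u v)) (Set.Ioo u v) :=
    (hf.differentiableOn_iteratedDerivWithin (by norm_num) hu).mono Set.Ioo_subset_Icc_self
  obtain ⟨ξ, hξ, h⟩ := taylor_mean_remainder_lagrange (n := 1) huv.ne
    (by rwa [uIcc_of_le huv.le]) (by rwa [uIcc_of_le huv.le, uIoo_of_le huv.le])
  rw [uIoo_of_le huv.le] at hξ
  rw [uIcc_of_le huv.le] at h
  refine ⟨ξ, hξ, ?_⟩
  have humem : u ∈ Set.Icc u v := ⟨le_rfl, huv.le⟩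
  have htay : taylorWithinEval f 1 (Set.Icc u v) u v = f u + deriv f u * (v - u) := by
    rw [taylorWithinEval_succ, taylor_within_zero_eval,
      iteratedDerivWithin_one, hdu.derivWithin (hu u humem)]
    simp; ring
  have h2 : iteratedDerivWithin 2 f (Set.Icc u v) ξ = deriv (deriv f) ξ := by
    rw [iterDW_of_mem_nhds (Icc_mem_nhds hξ.1 hξ.2)]
    rw [show (2 : ℕ) = 1 + 1 from rfl, iteratedDeriv_succ, iteratedDeriv_one]
  rw [htay, h2] at h
  norm_num [Nat.factorial] at h
  linarith [h]

theorem order2_taylor_under_approx (f : ℝ → ℝ) (a b : ℝ) (hab : a ≤ b)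
    (x0 r : ℝ) (hx0 : x0 = (a + b) / 2) (hr : r = (b - a) / 2)
    (hf : ContDiffOn ℝ 2 f (Set.Icc a b))
    (grad0 : ℝ) (hgrad0 : grad0 = |deriv f x0|) (hpos : 0 < grad0)
    (blo bhi : ℝ)
    (hrem : ∀ x ∈ Set.Icc a b, ∀ ξ ∈ Set.Icc a b,
      (1 / 2) * deriv (deriv f) ξ * (x - x0) ^ 2 ∈ Set.Icc blo bhi)
    (hne : f x0 - grad0 * r + bhi ≤ f x0 + grad0 * r + blo) :
    Set.Icc (f x0 - grad0 * r + bhi) (f x0 + grad0 * r + blo) ⊆ f '' Set.Icc a b := by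
  rcases eq_or_lt_of_le hab with heq | hlt
  · -- degenerate case a = b
    subst heq
    have hx0a : x0 = a := by rw [hx0]; ring
    have hr0 : r = 0 := by rw [hr]; ring
    have h0 := hrem a ⟨le_rfl, le_rfl⟩ a ⟨le_rfl, le_rfl⟩
    rw [hx0a] at *
    simp only [sub_self] at h0
    have hblo : blo ≤ 0 := by simpa using h0.1
    have hbhi : 0 ≤ bhi := by simpa using h0.2
    intro y hy
    rw [hr0] at hy
    have : y = f a := by
      rcases hy with ⟨h1, h2⟩
      rw [hr0] at hne
      have : bhi ≤ blo := by linarith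
      have hb0 : bhi = 0 := le_antisymm (by linarith) hbhi
      have hl0 : blo = 0 := le_antisymm hblo (by linarith)
      rw [hb0] at h1; rw [hl0] at h2
      linarith
    exact ⟨a, ⟨le_rfl, le_rfl⟩, this.symm⟩
  · have ha : a < x0 := by rw [hx0]; linarith
    have hb : x0 < b := by rw [hx0]; linarith
    have hbr : b - x0 = r := by rw [hx0, hr]; ring
    have hrpos : 0 < r := by rw [hr]; linarith
    have hdne : deriv f x0 ≠ 0 := by
      intro h; rw [hgrad0, h] at hpos; simp at hpos
    have hdiff : DifferentiableAt ℝ f x0 := differentiableAt_of_deriv_ne_zero hdne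
    -- right expansion on [x0, b]
    obtain ⟨ξ₂, hξ₂, hfb⟩ := expand_right hb
      (hf.mono (Set.Icc_subset_Icc ha.le le_rfl)) hdiff
    have hξ₂mem : ξ₂ ∈ Set.Icc a b := ⟨le_trans ha.le hξ₂.1.le, hξ₂.2.le⟩
    rw [hbr] at hfb
    -- left expansion via reflection g t = f (2*x0 - t)
    have h2x0a : 2 * x0 - b = a := by rw [hx0]; ring
    have hgcd : ContDiffOn ℝ 2 (fun t => f (2 * x0 - t)) (Set.Icc x0 b) := by
      apply (hf.mono (Set.Icc_subset_Icc le_rfl hb.le)).comp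
        ((contDiff_const.sub contDiff_id).contDiffOn)
      intro t ht
      constructor
      · simp only [id]; linarith [ht.2, h2x0a]
      · simp only [id]; linarith [ht.1]
    have hgd : DifferentiableAt ℝ (fun t => f (2 * x0 - t)) x0 := by
      have h1 : DifferentiableAt ℝ f (2 * x0 - x0) := by
        rw [show 2 * x0 - x0 = x0 by ring]; exact hdiff
      exact h1.comp x0 ((differentiableAt_const _).sub differentiableAt_id)
    obtain ⟨ξ₁', hξ₁', hga⟩ := expand_right hb hgcd hgd
    have hgderiv : ∀ t, deriv (fun t => f (2 * x0 - t)) t = -deriv f (2 * x0 - t) :=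
      fun t => deriv_comp_const_sub f (2 * x0) t
    have hgderiv2 : deriv (deriv (fun t => f (2 * x0 - t))) ξ₁'
        = deriv (deriv f) (2 * x0 - ξ₁') := by
      rw [funext hgderiv, deriv.fun_neg, deriv_comp_const_sub]
      ring
    rw [h2x0a, hgderiv x0, hgderiv2, hbr, show 2 * x0 - x0 = x0 by ring] at hga
    set ξ₁ : ℝ := 2 * x0 - ξ₁' with hξ₁def
    have hξ₁mem : ξ₁ ∈ Set.Icc a b := by
      constructor
      · have := hξ₁'.2; rw [hξ₁def]; linarith [h2x0a]
      · have := hξ₁'.1; rw [hξ₁def]; linarith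
    -- remainders
    have hRa_mem := hrem a ⟨le_rfl, hab⟩ ξ₁ hξ₁mem
    have hRb_mem := hrem b ⟨hab, le_rfl⟩ ξ₂ hξ₂mem
    have ha2 : (a - x0) ^ 2 = r ^ 2 := by rw [hx0, hr]; ring
    rw [ha2] at hRa_mem
    rw [hbr] at hRb_mem
    -- hga : f a = f x0 + -deriv f x0 * r + 1/2 * D ξ₁ * r^2
    -- hfb : f b = f x0 + deriv f x0 * r + 1/2 * D ξ₂ * r^2
    have hcont : ContinuousOn f (Set.Icc a b) := hf.continuousOn
    rcases lt_or_gt_of_ne hdne with hneg | hposd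
    · have hg0 : grad0 = -deriv f x0 := by rw [hgrad0, abs_of_neg hneg]
      intro y hy
      have h1 : f b ≤ f x0 - grad0 * r + bhi := by
        rw [hg0]; linarith [hRb_mem.2]
      have h2 : f x0 + grad0 * r + blo ≤ f a := by
        rw [hg0]; linarith [hRa_mem.1]
      exact intermediate_value_Icc' hab hcont ⟨le_trans h1 hy.1, le_trans hy.2 h2⟩
    · have hg0 : grad0 = deriv f x0 := by rw [hgrad0, abs_of_pos hposd]
      intro y hy
      have h1 : f a ≤ f x0 - grad0 * r + bhi := by
        rw [hg0]; linarith [hRa_mem.2]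
      have h2 : f x0 + grad0 * r + blo ≤ f b := by
        rw [hg0]; linarith [hRb_mem.1]
      exact intermediate_value_Icc hab hcont ⟨le_trans h1 hy.1, le_trans hy.2 h2⟩
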